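/- Let p ∈ (2,4), A > 0, B > 0, M > 0 and set t̃ = ((p−2)M/(2B))^(1/(4−p)). Define T : [0,∞) → ℝ by T(t) = (A/2)t² + (B/4)t⁴ − (M/p)t^p. If A − ((4−p)/2)·M·((p−2)M/(2B))^((p−2)/(4−p)) < 0, then T has a unique critical point t* in the open interval (0, t̃), this t* satisfies T''(t*) < 0, and T(t*) = max{T(t) : 0 ≤ t ≤ t̃}. -/

import Mathlib

open Real Set

/-- For `p ∈ (2,4)`, `A, B, M > 0`, `t̃ = ((p−2)M/(2B))^(1/(4−p))` and
`T t = (A/2)t² + (B/4)t⁴ − (M/p)t^p`, if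
`A − ((4−p)/2)·M·((p−2)M/(2B))^((p−2)/(4−p)) < 0` then `T` has a unique critical point
`t*` in `(0, t̃)`, with `T''(t*) < 0` and `T t* = max {T t : 0 ≤ t ≤ t̃}`. -/
theorem stmt_3 (p A B M : ℝ) (hp2 : 2 < p) (hp4 : p < 4)
    (hA : 0 < A) (hB : 0 < B) (hM : 0 < M)
    (h : A - (4 - p) / 2 * M * ((p - 2) * M / (2 * B)) ^ ((p - 2) / (4 - p)) < 0) :
    let T : ℝ → ℝ := fun t => A / 2 * t ^ 2 + B / 4 * t ^ 4 - M / p * t ^ p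
    let tt : ℝ := ((p - 2) * M / (2 * B)) ^ ((1 : ℝ) / (4 - p))
    ∃ ts : ℝ, 0 < ts ∧ ts < tt ∧ deriv T ts = 0 ∧
      (∀ t : ℝ, 0 < t → t < tt → deriv T t = 0 → t = ts) ∧
      deriv (deriv T) ts < 0 ∧
      (∀ t ∈ Icc (0 : ℝ) tt, T t ≤ T ts) := by
  intro T tt
  have h4p : (0:ℝ) < 4 - p := by linarith
  set C : ℝ := (p - 2) * M / (2 * B) with hCdef
  have hC : 0 < C := div_pos (mul_pos (by linarith) hM) (by linarith)
  have httC : tt = C ^ ((1:ℝ)/(4-p)) := rfl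
  have htt : 0 < tt := Real.rpow_pos_of_pos hC _
  have htt4 : tt ^ (4 - p) = C := by
    rw [httC, ← Real.rpow_mul hC.le, one_div, inv_mul_cancel₀ h4p.ne', Real.rpow_one]
  -- the auxiliary function g
  set g : ℝ → ℝ := fun t => A + B * t ^ 2 - M * t ^ (p - 2) with hgdef
  have hgc : Continuous g := by
    apply Continuous.sub
    · exact continuous_const.add (continuous_const.mul (continuous_pow 2))
    · exact continuous_const.mul (continuous_iff_continuousAt.2 fun x =>
        Real.continuousAt_rpow_const x _ (Or.inr (by linarith)))
  -- derivative of T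
  have hTd : ∀ t : ℝ, HasDerivAt T (A * t + B * t ^ 3 - M * t ^ (p - 1)) t := by
    intro t
    have h1 : HasDerivAt (fun t : ℝ => A / 2 * t ^ 2) (A * t) t := by
      have := (hasDerivAt_pow 2 t).const_mul (A / 2)
      refine this.congr_deriv ?_
      simp
      ring
    have h2 : HasDerivAt (fun t : ℝ => B / 4 * t ^ 4) (B * t ^ 3) t := by
      have := (hasDerivAt_pow 4 t).const_mul (B / 4)
      refine this.congr_deriv ?_
      simp
      ring
    have h3 : HasDerivAt (fun t : ℝ => M / p * t ^ p) (M * t ^ (p - 1)) t := by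
      have := (Real.hasDerivAt_rpow_const (x := t) (p := p) (Or.inr (by linarith))).const_mul (M / p)
      refine this.congr_deriv ?_
      field_simp
    exact (h1.add h2).sub h3
  have hT' : ∀ t : ℝ, deriv T t = A * t + B * t ^ 3 - M * t ^ (p - 1) := fun t => (hTd t).deriv
  have hgt : ∀ t : ℝ, 0 < t → deriv T t = t * g t := by
    intro t ht
    rw [hT']
    have e : t ^ (p - 1) = t ^ (p - 2) * t := by
      rw [show p - 1 = (p - 2) + 1 by ring, Real.rpow_add ht, Real.rpow_one]
    rw [e, hgdef]
    ring
  have hMC : M * (p - 2) = 2 * B * C := by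
    rw [hCdef]; field_simp
  -- derivative of g negative on (0, tt)
  have hgd : ∀ x ∈ Ioo (0:ℝ) tt, deriv g x < 0 := by
    intro x hx
    have hx0 : 0 < x := hx.1
    have hd : HasDerivAt g (2 * B * x - M * ((p - 2) * x ^ (p - 3))) x := by
      have d1 : HasDerivAt (fun t : ℝ => A + B * t ^ 2) (2 * B * x) x := by
        have := ((hasDerivAt_pow 2 x).const_mul B).const_add A
        refine this.congr_deriv ?_
        simp
        ring
      have d2 : HasDerivAt (fun t : ℝ => M * t ^ (p - 2)) (M * ((p - 2) * x ^ (p - 3))) x := by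
        have := (Real.hasDerivAt_rpow_const (x := x) (p := p - 2) (Or.inl hx0.ne')).const_mul M
        refine this.congr_deriv ?_
        ring_nf
      exact d1.sub d2
    rw [hd.deriv]
    have hx4 : x ^ (4 - p) < C := htt4 ▸ Real.rpow_lt_rpow hx0.le hx.2 h4p
    have hxp3 : 0 < x ^ (p - 3) := Real.rpow_pos_of_pos hx0 _
    have hxe : x = x ^ (4 - p) * x ^ (p - 3) := by
      rw [← Real.rpow_add hx0]
      have : (4 - p) + (p - 3) = 1 := by ring
      rw [this, Real.rpow_one]
    have key : 2 * B * x ^ (4 - p) * x ^ (p - 3) < 2 * B * C * x ^ (p - 3) := by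
      apply mul_lt_mul_of_pos_right _ hxp3
      nlinarith
    have h2 : M * ((p - 2) * x ^ (p - 3)) = 2 * B * C * x ^ (p - 3) := by
      rw [← mul_assoc, hMC]
    nlinarith [hxe, key, h2]
  have hganti : StrictAntiOn g (Icc 0 tt) :=
    strictAntiOn_of_deriv_neg (convex_Icc _ _) hgc.continuousOn
      (by rw [interior_Icc]; exact hgd)
  have hg0 : g 0 = A := by
    rw [hgdef]
    simp [Real.zero_rpow (by intro hh; linarith : p - 2 ≠ 0)]
  have hgtt : g tt < 0 := by
    have e1 : tt ^ (p - 2) = C ^ ((p - 2) / (4 - p)) := by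
      rw [httC, ← Real.rpow_mul hC.le]
      congr 1
      ring
    have e2 : tt ^ (2:ℕ) = C * C ^ ((p - 2) / (4 - p)) := by
      rw [← Real.rpow_natCast tt 2, httC, ← Real.rpow_mul hC.le]
      have e : (1 / (4 - p)) * ((2:ℕ):ℝ) = 1 + (p - 2) / (4 - p) := by
        push_cast
        field_simp
        norm_num
      rw [e, Real.rpow_add hC, Real.rpow_one]
    have h3 : B * (C * C ^ ((p - 2) / (4 - p))) = (p - 2) * M / 2 * C ^ ((p - 2) / (4 - p)) := by
      rw [← mul_assoc]
      have : B * C = (p - 2) * M / 2 := by rw [hCdef]; field_simp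
      rw [this]
    rw [hgdef]
    simp only
    rw [e2, e1]
    linarith
  -- existence of the critical point
  have hivt : (0:ℝ) ∈ g '' Icc 0 tt := by
    apply intermediate_value_Icc' htt.le hgc.continuousOn
    exact ⟨hgtt.le, by rw [hg0]; exact hA.le⟩
  obtain ⟨ts, hts_mem, hgts⟩ := hivt
  have hts0 : 0 < ts := by
    rcases eq_or_lt_of_le hts_mem.1 with hh | hh
    · exfalso; rw [← hh, hg0] at hgts; linarith
    · exact hh
  have htslt : ts < tt := by
    rcases eq_or_lt_of_le hts_mem.2 with hh | hh
    · exfalso; rw [hh] at hgts; linarith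
    · exact hh
  refine ⟨ts, hts0, htslt, ?_, ?_, ?_, ?_⟩
  · rw [hgt ts hts0, hgts, mul_zero]
  · intro t ht htlt hder
    rw [hgt t ht] at hder
    have hgt0 : g t = 0 := by
      rcases mul_eq_zero.1 hder with hh | hh
      · exact absurd hh ht.ne'
      · exact hh
    exact hganti.injOn ⟨ht.le, htlt.le⟩ hts_mem (hgt0.trans hgts.symm)
  · -- second derivative
    have hφ : deriv T = fun t => A * t + B * t ^ 3 - M * t ^ (p - 1) := funext hT'
    rw [hφ]
    have hd2 : HasDerivAt (fun t : ℝ => A * t + B * t ^ 3 - M * t ^ (p - 1))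
        (A + 3 * B * ts ^ 2 - M * ((p - 1) * ts ^ (p - 2))) ts := by
      have d1 : HasDerivAt (fun t : ℝ => A * t) A ts := by
        simpa using (hasDerivAt_id ts).const_mul A
      have d2 : HasDerivAt (fun t : ℝ => B * t ^ 3) (3 * B * ts ^ 2) ts := by
        have := (hasDerivAt_pow 3 ts).const_mul B
        refine this.congr_deriv ?_
        simp
        ring
      have d3 : HasDerivAt (fun t : ℝ => M * t ^ (p - 1)) (M * ((p - 1) * ts ^ (p - 2))) ts := by
        have := (Real.hasDerivAt_rpow_const (x := ts) (p := p - 1) (Or.inl hts0.ne')).const_mul M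
        refine this.congr_deriv ?_
        ring_nf
      exact (d1.add d2).sub d3
    rw [hd2.deriv]
    have hA' : A = M * ts ^ (p - 2) - B * ts ^ 2 := by
      rw [hgdef] at hgts
      simp only at hgts
      linarith
    have hts4 : ts ^ (4 - p) < C := htt4 ▸ Real.rpow_lt_rpow hts0.le htslt h4p
    have h2pos : 0 < ts ^ (p - 2) := Real.rpow_pos_of_pos hts0 _
    have hsq : 2 * B * ts ^ 2 = 2 * B * (ts ^ (4 - p) * ts ^ (p - 2)) := by
      rw [← Real.rpow_add hts0, show (4 - p) + (p - 2) = ((2:ℕ):ℝ) by norm_num, Real.rpow_natCast]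
    have key : 2 * B * ts ^ (4 - p) * ts ^ (p - 2) < 2 * B * C * ts ^ (p - 2) := by
      apply mul_lt_mul_of_pos_right _ h2pos
      nlinarith
    have hM' : M * (p - 2) * ts ^ (p - 2) = 2 * B * C * ts ^ (p - 2) := by rw [hMC]
    nlinarith [hA', hsq, key, hM']
  · -- maximum
    have hTcont : Continuous T := by
      exact continuous_iff_continuousAt.2 fun t => (hTd t).continuousAt
    have hmono : StrictMonoOn T (Icc 0 ts) := by
      apply strictMonoOn_of_deriv_pos (convex_Icc _ _) hTcont.continuousOn
      rw [interior_Icc]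
      intro x hx
      rw [hgt x hx.1]
      apply mul_pos hx.1
      have : g ts < g x := hganti ⟨hx.1.le, by linarith [hx.2]⟩ hts_mem (by linarith [hx.2])
      linarith [hgts]
    have hanti : StrictAntiOn T (Icc ts tt) := by
      apply strictAntiOn_of_deriv_neg (convex_Icc _ _) hTcont.continuousOn
      rw [interior_Icc]
      intro x hx
      rw [hgt x (lt_trans hts0 hx.1)]
      have hgx : g x < 0 := by
        have : g x < g ts := hganti hts_mem ⟨by linarith [hts0, hx.1], hx.2.le⟩ hx.1
        linarith [hgts]
      exact mul_neg_of_pos_of_neg (lt_trans hts0 hx.1) hgx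
    intro t htmem
    rcases le_total t ts with hle | hge
    · exact hmono.monotoneOn ⟨htmem.1, hle⟩ ⟨hts0.le, le_refl ts⟩ hle
    · exact hanti.antitoneOn ⟨le_refl ts, htslt.le⟩ ⟨hge, htmem.2⟩ hge
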